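/- Let V be an almost-equidistant set in ℝ^d and let C ⊆ V be a clique of maximum cardinality k in the unit-distance graph on V (i.e., a maximal-size subset of V with all pairwise distances 1). Then |V| ≤ k² + k. -/
import Mathlib


theorem almost_equidistant_card_le_max_clique (d k : ℕ)
    (V C : Finset (EuclideanSpace ℝ (Fin d)))
    (hAE : ∀ x ∈ V, ∀ y ∈ V, ∀ z ∈ V, x ≠ y → y ≠ z → x ≠ z →
      dist x y = 1 ∨ dist y z = 1 ∨ dist x z = 1)
    (hCV : C ⊆ V)
    (hclique : ∀ u ∈ C, ∀ v ∈ C, u ≠ v → dist u v = 1)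
    (hmax : ∀ C' ⊆ V, (∀ u ∈ C', ∀ v ∈ C', u ≠ v → dist u v = 1) → C'.card ≤ C.card)
    (hk : C.card = k) :
    V.card ≤ k ^ 2 + k := by
  classical
  subst hk
  set A : EuclideanSpace ℝ (Fin d) → Finset (EuclideanSpace ℝ (Fin d)) :=
    fun c => V.filter (fun x => x ≠ c ∧ dist x c ≠ 1) with hA
  have hAcard : ∀ c ∈ C, (A c).card ≤ C.card := by
    intro c hc
    apply hmax _ (Finset.filter_subset _ _)
    intro u hu v hv huv
    simp only [hA, Finset.mem_filter] at hu hv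
    obtain ⟨huV, hune, hud⟩ := hu
    obtain ⟨hvV, hvne, hvd⟩ := hv
    rcases hAE u huV v hvV c (hCV hc) huv hvne hune with h | h | h
    · exact h
    · exact absurd h hvd
    · exact absurd h hud
  have hcover : V ⊆ C ∪ C.biUnion A := by
    intro x hx
    by_cases hxC : x ∈ C
    · exact Finset.mem_union_left _ hxC
    · have hex : ∃ c ∈ C, dist x c ≠ 1 := by
        by_contra h
        push_neg at h
        have hclique' : ∀ u ∈ insert x C, ∀ v ∈ insert x C, u ≠ v → dist u v = 1 := by
          intro u hu v hv huv
          rcases Finset.mem_insert.1 hu with rfl | hu'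
          · rcases Finset.mem_insert.1 hv with rfl | hv'
            · exact absurd rfl huv
            · exact h v hv'
          · rcases Finset.mem_insert.1 hv with rfl | hv'
            · rw [dist_comm]; exact h u hu'
            · exact hclique u hu' v hv' huv
        have hle := hmax (insert x C) (Finset.insert_subset hx hCV) hclique'
        rw [Finset.card_insert_of_notMem hxC] at hle
        omega
      obtain ⟨c, hc, hcd⟩ := hex
      refine Finset.mem_union_right _ (Finset.mem_biUnion.2 ⟨c, hc, ?_⟩)
      simp only [hA, Finset.mem_filter]
      exact ⟨hx, fun he => hxC (he ▸ hc), hcd⟩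
  have hsum : (C.biUnion A).card ≤ C.card * C.card := by
    calc (C.biUnion A).card ≤ ∑ c ∈ C, (A c).card := Finset.card_biUnion_le
      _ ≤ ∑ _c ∈ C, C.card := Finset.sum_le_sum hAcard
      _ = C.card * C.card := by rw [Finset.sum_const, smul_eq_mul]
  calc V.card ≤ (C ∪ C.biUnion A).card := Finset.card_le_card hcover
    _ ≤ C.card + (C.biUnion A).card := Finset.card_union_le _ _
    _ ≤ C.card + C.card * C.card := by omega
    _ = C.card ^ 2 + C.card := by ring
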